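/- Let M be an n×n matrix with nonnegative real entries satisfying ∑_{i,j} M_{i,j} = v. Then the permanent of M is at most (v/n)^n. -/

import Mathlib

open Finset

/-- The permanent of a matrix. -/
def permanent {n : ℕ} (M : Matrix (Fin n) (Fin n) ℝ) : ℝ :=
  ∑ σ : Equiv.Perm (Fin n), ∏ i, M i (σ i)

/-- If M is an n×n matrix with nonnegative entries whose total sum is v,
then perm(M) ≤ (v/n)^n. -/
theorem permanent_upper_bound (n : ℕ) (hn : 0 < n) (v : ℝ)
    (M : Matrix (Fin n) (Fin n) ℝ) (hM : ∀ i j, 0 ≤ M i j)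
    (hsum : ∑ i, ∑ j, M i j = v) :
    permanent M ≤ (v / n) ^ n := by
  set r : Fin n → ℝ := fun i => ∑ j, M i j with hr
  have hrnn : ∀ i, 0 ≤ r i := fun i => Finset.sum_nonneg fun j _ => hM i j
  -- Step 1: permanent M ≤ ∏ i, r i
  have step1 : permanent M ≤ ∏ i, r i := by
    have hexp : ∏ i, r i = ∑ f : Fin n → Fin n, ∏ i, M i (f i) := by
      rw [hr]; beta_reduce; rw [Finset.prod_univ_sum (t := fun _ => Finset.univ) (f := fun i j => M i j)]
      rfl
    rw [hexp, permanent]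
    have hinj : Function.Injective (fun σ : Equiv.Perm (Fin n) => (σ : Fin n → Fin n)) := by
      intro a b h; exact Equiv.coe_fn_injective h
    calc ∑ σ : Equiv.Perm (Fin n), ∏ i, M i (σ i)
        = ∑ f ∈ Finset.univ.image (fun σ : Equiv.Perm (Fin n) => (σ : Fin n → Fin n)),
            ∏ i, M i (f i) := by
          rw [Finset.sum_image (fun a _ b _ h => hinj h)]
      _ ≤ ∑ f : Fin n → Fin n, ∏ i, M i (f i) := by
          apply Finset.sum_le_sum_of_subset_of_nonneg (Finset.subset_univ _)
          intro f _ _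
          exact Finset.prod_nonneg fun i _ => hM i (f i)
  -- Step 2: AM-GM
  have hnR : (0:ℝ) < n := by exact_mod_cast hn
  have hgm : ∏ i, (r i) ^ ((n:ℝ)⁻¹) ≤ v / n := by
    have := Real.geom_mean_le_arith_mean_weighted Finset.univ
      (fun _ => (n:ℝ)⁻¹) r (fun i _ => by positivity)
      (by simp [Finset.card_univ]; field_simp) (fun i _ => hrnn i)
    calc ∏ i, (r i) ^ ((n:ℝ)⁻¹) ≤ ∑ i, (n:ℝ)⁻¹ * r i := this
      _ = v / n := by
          rw [← Finset.mul_sum, hr]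
          rw [hsum]; ring
  have step2 : ∏ i, r i ≤ (v / n) ^ n := by
    have key : ∏ i, r i = (∏ i, (r i) ^ ((n:ℝ)⁻¹)) ^ n := by
      rw [← Finset.prod_pow]
      apply Finset.prod_congr rfl
      intro i _
      rw [← Real.rpow_natCast ((r i) ^ ((n:ℝ)⁻¹)) n, ← Real.rpow_mul (hrnn i)]
      rw [inv_mul_cancel₀ (ne_of_gt hnR), Real.rpow_one]
    rw [key]
    exact pow_le_pow_left₀ (Finset.prod_nonneg fun i _ => Real.rpow_nonneg (hrnn i) _) hgm n
  exact step1.trans step2
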